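/- Let (X,d,μ) be a metric measure space, μ upper 1-regular, K a 1-dimensional CZ kernel satisfying the Hölder condition |K(x,p₁) − K(x,p₂)| ≤ B d(p₁,p₂)^β / d(p₁,x)^{1+β} for d(p₁,p₂) ≤ d(p₁,x)/2. Let γ : [a,b] → X and L : [a,b] → X be curves with d(γ(t), L(t)) ≤ C₀ |t − t₀|^{1+ε} for some ε > 0 and d(γ(t), p) ≥ 2^{-(j+2)} on the domain of integration, where p = γ(t₀), and suppose the set {t : d(γ(t),p) ≤ 2^{-(j-1)}} has diameter ≤ D 2^{-j}. If d(γ(t),L(t)) ≤ d(γ(t),p)/2 on this set, then ∫_{{t : 2^{-(j+2)} ≤ d(γ(t),p) ≤ 2^{-(j-1)}}} |K(p,γ(t)) − K(p,L(t))| dt ≤ C' 2^{-εβ j} for a constant C' depending only on B, β, C₀, D, ε. -/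

import Mathlib

open Set MeasureTheory Metric

/-- Key CZ comparison estimate along a curve and its horizontal
tangent. If `K` is `β`-Hölder in its second variable, `d(γ(t),L(t)) ≤ C₀|t−t₀|^{1+ε}`,
`d(γ(t),L(t)) ≤ d(γ(t),p)/2` on the relevant set, and the preimage of the ball
`B(p,2^{-(j-1)})` has diameter `≤ D 2^{-j}`, then
`∫_{2^{-(j+2)} ≤ d(γ(t),p) ≤ 2^{-(j-1)}} |K(p,γ(t)) − K(p,L(t))| dt ≤ C' 2^{-εβj}`,
with `C'` depending only on `B, β, C₀, D, ε`. -/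
theorem stmt_16 (B β C₀ D ε : ℝ) (hB : 0 < B) (hβ : β ∈ Ioc (0:ℝ) 1)
    (hC₀ : 0 < C₀) (hD : 0 < D) (hε : 0 < ε) :
    ∃ C' : ℝ, 0 < C' ∧
      ∀ (X : Type) (_ : MetricSpace X)
        (K : X → X → ℝ)
        (_ : ∀ (x p₁ p₂ : X), dist p₁ p₂ ≤ dist p₁ x / 2 →
          |K x p₁ - K x p₂| ≤ B * dist p₁ p₂ ^ β / dist p₁ x ^ (1 + β))
        (a b : ℝ) (γ L : ℝ → X) (t₀ : ℝ) (_ : t₀ ∈ Icc a b) (p : X) (_ : γ t₀ = p)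
        (j : ℤ)
        (_ : ∀ t ∈ Icc a b, dist (γ t) (L t) ≤ C₀ * |t - t₀| ^ (1 + ε))
        (_ : ∀ t ∈ {t ∈ Icc a b | dist (γ t) p ≤ (2:ℝ) ^ (-(j:ℝ) + 1)},
          ∀ t' ∈ {t ∈ Icc a b | dist (γ t) p ≤ (2:ℝ) ^ (-(j:ℝ) + 1)},
            |t - t'| ≤ D * (2:ℝ) ^ (-(j:ℝ)))
        (_ : ∀ t ∈ {t ∈ Icc a b | dist (γ t) p ≤ (2:ℝ) ^ (-(j:ℝ) + 1)},
          dist (γ t) (L t) ≤ dist (γ t) p / 2),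
        ∫ t in {t ∈ Icc a b |
            (2:ℝ) ^ (-(j:ℝ) - 2) ≤ dist (γ t) p ∧ dist (γ t) p ≤ (2:ℝ) ^ (-(j:ℝ) + 1)},
          |K p (γ t) - K p (L t)|
        ≤ C' * (2:ℝ) ^ (-(ε * β * (j:ℝ))) := by
  obtain ⟨hβ0, hβ1⟩ := hβ
  refine ⟨(2:ℝ) ^ (3 + 2*β) * B * C₀ ^ β * D ^ ((1+ε)*β + 1), by positivity, ?_⟩
  intro X _ K hK a b γ L t₀ ht₀ p hp j hcurve hdiam hhalf
  set jr : ℝ := (j:ℝ)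
  set S : Set ℝ := {t ∈ Icc a b |
      (2:ℝ) ^ (-jr - 2) ≤ dist (γ t) p ∧ dist (γ t) p ≤ (2:ℝ) ^ (-jr + 1)} with hS
  set T : Set ℝ := {t ∈ Icc a b | dist (γ t) p ≤ (2:ℝ) ^ (-jr + 1)} with hT
  have ht₀T : t₀ ∈ T := ⟨ht₀, by simp [hp]; positivity⟩
  have hST : S ⊆ T := fun t ht => ⟨ht.1, ht.2.2⟩
  -- pointwise bound
  set M : ℝ := B * (C₀ * (D * (2:ℝ) ^ (-jr)) ^ (1+ε)) ^ β / ((2:ℝ) ^ (-jr - 2)) ^ (1+β)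
    with hM
  have hMpos : 0 < M := by positivity
  have hptwise : ∀ t ∈ S, |K p (γ t) - K p (L t)| ≤ M := by
    intro t ht
    have hd1 : (2:ℝ) ^ (-jr - 2) ≤ dist (γ t) p := ht.2.1
    have hd1' : (0:ℝ) < dist (γ t) p := lt_of_lt_of_le (by positivity) hd1
    have htt₀ : |t - t₀| ≤ D * (2:ℝ) ^ (-jr) := hdiam t (hST ht) t₀ ht₀T
    have hγL : dist (γ t) (L t) ≤ C₀ * (D * (2:ℝ) ^ (-jr)) ^ (1+ε) := by
      refine le_trans (hcurve t ht.1) ?_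
      exact mul_le_mul_of_nonneg_left
        (Real.rpow_le_rpow (abs_nonneg _) htt₀ (by positivity)) hC₀.le
    calc |K p (γ t) - K p (L t)|
        ≤ B * dist (γ t) (L t) ^ β / dist (γ t) p ^ (1+β) :=
          hK p (γ t) (L t) (hhalf t (hST ht))
      _ ≤ M := by
          rw [hM]
          exact div_le_div₀ (by positivity)
            (mul_le_mul_of_nonneg_left
              (Real.rpow_le_rpow dist_nonneg hγL hβ0.le) hB.le)
            (by positivity)
            (Real.rpow_le_rpow (by positivity) hd1 (by positivity))
  -- measure bound
  have hSsub : S ⊆ Icc (t₀ - D * (2:ℝ) ^ (-jr)) (t₀ + D * (2:ℝ) ^ (-jr)) := by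
    intro t ht
    have := hdiam t (hST ht) t₀ ht₀T
    rw [abs_le] at this
    constructor <;> linarith [this.1, this.2]
  have hmeas : volume S ≤ ENNReal.ofReal (2 * (D * (2:ℝ) ^ (-jr))) := by
    refine le_trans (measure_mono hSsub) ?_
    rw [Real.volume_Icc]
    apply ENNReal.ofReal_le_ofReal
    ring_nf
    exact le_refl _
  have hfin : volume S < ⊤ :=
    lt_of_le_of_lt hmeas (by exact ENNReal.ofReal_lt_top)
  have hmeasR : (volume S).toReal ≤ 2 * (D * (2:ℝ) ^ (-jr)) := by
    refine ENNReal.toReal_le_of_le_ofReal (by positivity) hmeas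
  -- integral bound
  have hRHS : M * (2 * (D * (2:ℝ) ^ (-jr)))
      = (2:ℝ) ^ (3 + 2*β) * B * C₀ ^ β * D ^ ((1+ε)*β + 1) * (2:ℝ) ^ (-(ε * β * jr)) := by
    have h2 : (0:ℝ) < 2 := by norm_num
    rw [hM]
    rw [Real.mul_rpow hC₀.le (by positivity),
        Real.mul_rpow hD.le (by positivity),
        Real.mul_rpow (by positivity) (by positivity),
        ← Real.rpow_mul h2.le, ← Real.rpow_mul h2.le, ← Real.rpow_mul h2.le,
        ← Real.rpow_mul hD.le,
        div_eq_mul_inv, ← Real.rpow_neg h2.le,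
        Real.rpow_add hD, Real.rpow_one]
    calc B * (C₀ ^ β * (D ^ ((1+ε)*β) * (2:ℝ) ^ (-jr * (1+ε) * β))) *
          (2:ℝ) ^ (-((-jr - 2) * (1+β))) * (2 * (D * (2:ℝ) ^ (-jr)))
        = (B * C₀ ^ β * (D ^ ((1+ε)*β) * D)) *
          ((2:ℝ) ^ (-jr * (1+ε) * β) * (2:ℝ) ^ (-((-jr - 2) * (1+β))) *
            ((2:ℝ) ^ (1:ℝ) * (2:ℝ) ^ (-jr))) := by
          rw [Real.rpow_one]; ring
      _ = (B * C₀ ^ β * (D ^ ((1+ε)*β) * D)) *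
          (2:ℝ) ^ ((3 + 2*β) + -(ε * β * jr)) := by
          rw [← Real.rpow_add h2, ← Real.rpow_add h2, ← Real.rpow_add h2]
          congr 1
          congr 1
          ring
      _ = _ := by rw [Real.rpow_add h2]; ring
  by_cases hint : AEStronglyMeasurable (fun t => |K p (γ t) - K p (L t)|) (volume.restrict S)
  · have hnorm : ‖∫ t in S, |K p (γ t) - K p (L t)|‖ ≤ M * (volume S).toReal :=
      norm_setIntegral_le_of_norm_le_const hfin
        (fun t ht => by rw [Real.norm_eq_abs, abs_abs]; exact hptwise t ht)
    calc ∫ t in S, |K p (γ t) - K p (L t)|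
        ≤ ‖∫ t in S, |K p (γ t) - K p (L t)|‖ := le_abs_self _
      _ ≤ M * (volume S).toReal := hnorm
      _ ≤ M * (2 * (D * (2:ℝ) ^ (-jr))) := by gcongr
      _ = _ := hRHS
  · rw [integral_undef (fun h => hint h.1)]
    positivity
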